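/- Let α ≥ log_{3(√2−1)} 2 be a real number, where log_b x denotes the base-b logarithm (ln x)/(ln b). Then for all real x, y with 0 ≤ x ≤ 1/2 and 0 ≤ y ≤ 1/2, writing s = √(x² + y²), one has (x/(x+1))^α + (y/(y+1))^α ≤ (s/(s+1))^α. -/

import Mathlib

open Real Set
namespace Mg

noncomputable def c : ℝ := Real.logb (3 * (Real.sqrt 2 - 1)) 2

lemma hr2 : (Real.sqrt 2)^2 = 2 := Real.sq_sqrt (by norm_num)

lemma hb1 : (1:ℝ) < 3 * (Real.sqrt 2 - 1) := by
  nlinarith [hr2, Real.sqrt_nonneg 2]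

lemma hc3 : (3:ℝ) ≤ c := by
  rw [c, Real.le_logb_iff_rpow_le hb1 (by norm_num)]
  have : ((3:ℝ) * (Real.sqrt 2 - 1)) ^ (3:ℝ) = (3 * (Real.sqrt 2 - 1))^(3:ℕ) := by
    rw [← Real.rpow_natCast]; norm_num
  rw [this]
  nlinarith [hr2, Real.sqrt_nonneg 2]

lemma hc72 : c ≤ 7/2 := by
  rw [c, Real.logb_le_iff_le_rpow hb1 (by norm_num)]
  have hb0 : (0:ℝ) ≤ 3 * (Real.sqrt 2 - 1) := le_of_lt (lt_trans one_pos hb1)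
  have e : (3*(Real.sqrt 2 - 1))^(7:ℕ) = 2187*(169*Real.sqrt 2 - 239) := by
    linear_combination (2187*((Real.sqrt 2)^5 - 7*(Real.sqrt 2)^4 + 23*(Real.sqrt 2)^3
      - 49*(Real.sqrt 2)^2 + 81*(Real.sqrt 2) - 119)) * hr2
  have h7 : (4:ℝ) ≤ (3 * (Real.sqrt 2 - 1))^(7:ℕ) := by
    rw [e]; nlinarith [hr2, Real.sqrt_nonneg 2]
  calc (2:ℝ) = ((4:ℝ))^((1:ℝ)/2) := by
        rw [show (4:ℝ) = 2^(2:ℕ) by norm_num, ← Real.rpow_natCast 2 2, ← Real.rpow_mul (by norm_num)]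
        norm_num
    _ ≤ ((3 * (Real.sqrt 2 - 1))^(7:ℕ))^((1:ℝ)/2) := by
        apply Real.rpow_le_rpow (by norm_num) h7 (by norm_num)
    _ = (3 * (Real.sqrt 2 - 1))^((7:ℝ)/2) := by
        rw [← Real.rpow_natCast (3 * (Real.sqrt 2 - 1)) 7, ← Real.rpow_mul hb0]
        norm_num

lemma key : (3:ℝ)^c * (Real.sqrt 2 - 1)^c = 2 := by
  rw [← Real.mul_rpow (by norm_num) (by nlinarith [hb1])]
  rw [c, Real.rpow_logb (lt_trans one_pos hb1) (ne_of_gt hb1) (by norm_num)]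

noncomputable def h (t : ℝ) : ℝ := t ^ (c-2) / (t+1) ^ (c+1)

lemma h_nonneg {t : ℝ} (ht : 0 ≤ t) : 0 ≤ h t :=
  div_nonneg (Real.rpow_nonneg ht _) (Real.rpow_nonneg (by linarith) _)

lemma hasDerivAt_h {t : ℝ} (ht : 0 < t) :
    HasDerivAt h ((c-2 - 3*t) * (t ^ (c-3) * (t+1) ^ c) / ((t+1) ^ (c+1))^2) t := by
  have ht1 : (0:ℝ) < t + 1 := by linarith
  have d1 : HasDerivAt (fun t : ℝ => t ^ (c-2)) ((c-2) * t ^ (c-3)) t := by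
    have := Real.hasDerivAt_rpow_const (x := t) (p := c-2) (Or.inl (ne_of_gt ht))
    convert this using 2; ring_nf
  have d2 : HasDerivAt (fun t : ℝ => (t+1) ^ (c+1)) ((c+1) * (t+1) ^ c) t := by
    have base : HasDerivAt (fun t : ℝ => t + 1) 1 t := (hasDerivAt_id t).add_const 1
    have h2 := base.rpow_const (p := c+1) (Or.inl (ne_of_gt ht1))
    convert h2 using 1
    ring_nf
  have hne : ((t:ℝ)+1) ^ (c+1) ≠ 0 := by positivity
  have := d1.div d2 hne
  refine this.congr_deriv ?_
  have e1 : t ^ (c-2) = t ^ (c-3) * t := by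
    rw [← Real.rpow_add_one (ne_of_gt ht)]; congr 1; ring
  have e2 : (t+1) ^ (c+1) = (t+1) ^ c * (t+1) := by
    rw [← Real.rpow_add_one (ne_of_gt ht1)]
  rw [e1, e2]; ring

lemma tstar_pos : (0:ℝ) < (c-2)/3 := by linarith [hc3]
lemma tstar_le : (c-2)/3 ≤ 1/2 := by linarith [hc72]

lemma h_cont : ContinuousOn h (Ici 0) := by
  intro t ht
  simp only [mem_Ici] at ht
  have ht1 : t + 1 ≠ 0 := by linarith
  have c1 : ContinuousAt (fun t : ℝ => t ^ (c-2)) t :=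
    Real.continuousAt_rpow_const t _ (Or.inr (by linarith [hc3]))
  have c2 : ContinuousAt (fun t : ℝ => (t+1) ^ (c+1)) t :=
    (continuousAt_id.add continuousAt_const).rpow_const (Or.inl ht1)
  have hne : (t+1) ^ (c+1) ≠ 0 :=
    ne_of_gt (Real.rpow_pos_of_pos (by linarith) _)
  exact ((c1.div c2 hne)).continuousWithinAt

lemma h_mono : MonotoneOn h (Icc 0 ((c-2)/3)) := by
  apply monotoneOn_of_deriv_nonneg (convex_Icc _ _) (h_cont.mono (fun x hx => hx.1))
  · rw [interior_Icc]
    exact fun t ht => (hasDerivAt_h ht.1).differentiableAt.differentiableWithinAt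
  · intro t ht
    rw [interior_Icc] at ht
    rw [(hasDerivAt_h ht.1).deriv]
    apply div_nonneg _ (sq_nonneg _)
    apply mul_nonneg (by linarith [ht.2])
    exact mul_nonneg (Real.rpow_nonneg ht.1.le _) (Real.rpow_nonneg (by linarith [ht.1]) _)

lemma h_anti : AntitoneOn h (Ici ((c-2)/3)) := by
  apply antitoneOn_of_deriv_nonpos (convex_Ici _) (h_cont.mono (fun x hx => le_trans tstar_pos.le hx))
  · rw [interior_Ici]
    exact fun t ht => (hasDerivAt_h (lt_trans tstar_pos ht)).differentiableAt.differentiableWithinAt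
  · intro t ht
    rw [interior_Ici, mem_Ioi] at ht
    have ht0 : 0 < t := lt_trans tstar_pos ht
    rw [(hasDerivAt_h ht0).deriv]
    apply div_nonpos_of_nonpos_of_nonneg _ (sq_nonneg _)
    apply mul_nonpos_of_nonpos_of_nonneg
    · nlinarith [ht]
    · exact mul_nonneg (Real.rpow_nonneg ht0.le _) (Real.rpow_nonneg (by linarith) _)

noncomputable def F (t : ℝ) : ℝ := (t/(t+1)) ^ c
noncomputable def sf (y : ℝ) : ℝ := Real.sqrt (y^2 + 1/4)
noncomputable def G (y : ℝ) : ℝ := F (sf y) - F y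

lemma sf_sq (y : ℝ) : (sf y)^2 = y^2 + 1/4 := Real.sq_sqrt (by positivity)
lemma sf_half (y : ℝ) : 1/2 ≤ sf y := by
  rw [show (1:ℝ)/2 = Real.sqrt ((1/2)^2) from (Real.sqrt_sq (by norm_num)).symm]
  exact Real.sqrt_le_sqrt (by nlinarith [sq_nonneg y])
lemma sf_pos (y : ℝ) : 0 < sf y := lt_of_lt_of_le (by norm_num) (sf_half y)
lemma sf_gt {y : ℝ} (hy : 0 ≤ y) : y < sf y := by
  nlinarith [sf_sq y, sf_pos y]
lemma sf_mono {y z : ℝ} (hy : 0 ≤ y) (hyz : y ≤ z) : sf y ≤ sf z :=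
  Real.sqrt_le_sqrt (by nlinarith)

lemma hasDerivAt_sf (y : ℝ) : HasDerivAt sf (y / sf y) y := by
  have d0 : HasDerivAt (fun y : ℝ => y^2 + 1/4) (2*y) y := by
    simpa using (hasDerivAt_pow 2 y).add_const (1/4)
  have hne : y^2 + 1/4 ≠ 0 := by positivity
  have := (Real.hasDerivAt_sqrt hne).comp y d0
  refine this.congr_deriv ?_
  rw [show Real.sqrt (y^2+1/4) = sf y from rfl]
  field_simp [(sf_pos y).ne']

lemma hasDerivAt_F {t : ℝ} (ht : -1 < t) :
    HasDerivAt F (c * (t/(t+1))^(c-1) / (t+1)^2) t := by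
  have ht1 : (0:ℝ) < t + 1 := by linarith
  have inner : HasDerivAt (fun t : ℝ => t/(t+1)) (1/(t+1)^2) t := by
    have := (hasDerivAt_id t).div ((hasDerivAt_id t).add_const 1) (ne_of_gt ht1)
    refine this.congr_deriv ?_
    simp only [id_eq]
    ring
  have := inner.rpow_const (p := c) (Or.inr (by linarith [hc3]))
  refine this.congr_deriv ?_
  ring

lemma Fderiv_eq {t : ℝ} (ht : 0 < t) : c * (t/(t+1))^(c-1) / (t+1)^2 = c * (t * h t) := by
  have ht1 : (0:ℝ) < t+1 := by linarith
  rw [Real.div_rpow ht.le (by linarith), h]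
  have e1 : t^(c-1) = t^(c-2)*t := by
    rw [← Real.rpow_add_one (ne_of_gt ht)]; congr 1; ring
  have e2 : (t+1)^(c+1) = (t+1)^(c-1)*(t+1)^(2:ℕ) := by
    rw [← Real.rpow_natCast (t+1) 2, ← Real.rpow_add ht1]; congr 1; push_cast; ring
  rw [e1, e2]
  have hne1 : (t+1)^(c-1) ≠ 0 := ne_of_gt (Real.rpow_pos_of_pos ht1 _)
  have hne2 : ((t:ℝ)+1) ≠ 0 := ne_of_gt ht1
  field_simp
  try ring
  try simp

lemma hasDerivAt_G {y : ℝ} (hy : 0 < y) :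
    HasDerivAt G (c * y * (h (sf y) - h y)) y := by
  have hs0 : 0 < sf y := sf_pos y
  have dF1 := (hasDerivAt_F (t := sf y) (by linarith)).comp y (hasDerivAt_sf y)
  have dF2 := hasDerivAt_F (t := y) (by linarith)
  have dG := dF1.sub dF2
  have : G = fun y => F (sf y) - F y := rfl
  rw [this]
  refine dG.congr_deriv ?_
  rw [Fderiv_eq hs0, Fderiv_eq hy]
  field_simp [hs0.ne']

lemma F_contOn : ContinuousOn F (Ici 0) := by
  intro t ht
  simp only [mem_Ici] at ht
  have ht1 : t + 1 ≠ 0 := by positivity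
  have : ContinuousAt (fun t : ℝ => t/(t+1)) t :=
    continuousAt_id.div (continuousAt_id.add continuousAt_const) ht1
  exact (this.rpow_const (Or.inr (by linarith [hc3]))).continuousWithinAt

lemma G_contOn : ContinuousOn G (Icc 0 (1/2)) := by
  have sc : ContinuousOn sf (Icc (0:ℝ) (1/2)) :=
    (Real.continuous_sqrt.comp (by fun_prop)).continuousOn
  have c1 : ContinuousOn (fun y => F (sf y)) (Icc (0:ℝ) (1/2)) :=
    F_contOn.comp sc (fun y _ => (sf_pos y).le)
  exact c1.sub (F_contOn.mono (fun y hy => hy.1))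

lemma F_half : F (1/2) = (1/3:ℝ)^c := by
  rw [F]; norm_num

lemma G_zero : G 0 = (1/3:ℝ)^c := by
  have : sf 0 = 1/2 := by
    rw [sf, show (0:ℝ)^2 + 1/4 = (1/2)^2 by norm_num, Real.sqrt_sq (by norm_num)]
  rw [G, this, F_half, F]
  norm_num
  exact Real.zero_rpow (by linarith [hc3])

lemma G_half : G (1/2) = (1/3:ℝ)^c := by
  have hs : sf (1/2) = Real.sqrt (1/2) := by
    rw [sf]; norm_num
  have ha2 : (Real.sqrt (1/2))^2 = 1/2 := Real.sq_sqrt (by norm_num)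
  have ha0 : 0 < Real.sqrt (1/2) := Real.sqrt_pos.mpr (by norm_num)
  have hmul : Real.sqrt (1/2) * Real.sqrt 2 = 1 := by
    rw [← Real.sqrt_mul (by norm_num)]; norm_num
  have hrat : Real.sqrt (1/2) / (Real.sqrt (1/2) + 1) = Real.sqrt 2 - 1 := by
    have h2 : (Real.sqrt 2)^2 = 2 := Real.sq_sqrt (by norm_num)
    have hane : Real.sqrt (1/2) + 1 ≠ 0 := by positivity
    field_simp
    nlinarith [hmul, ha2, h2, Real.sqrt_nonneg 2]
  have hF : F (sf (1/2)) = (Real.sqrt 2 - 1)^c := by rw [hs, F, hrat]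
  have h3c : (0:ℝ) < (3:ℝ)^c := Real.rpow_pos_of_pos (by norm_num) _
  have hinv : ((1:ℝ)/3)^c = 1/(3:ℝ)^c := by
    rw [Real.div_rpow (by norm_num) (by norm_num), Real.one_rpow]
  have h2c : (Real.sqrt 2 - 1)^c = 2/(3:ℝ)^c := by
    field_simp
    linarith [key]
  rw [G, hF, F_half, h2c, hinv]
  field_simp
  ring

lemma core {y : ℝ} (h0 : 0 ≤ y) (h1 : y ≤ 1/2) : (1/3:ℝ)^c ≤ G y := by
  set A : Set ℝ := {z | z ∈ Icc (0:ℝ) ((c-2)/3) ∧ h z ≤ h (sf z)} with hA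
  have hA0 : (0:ℝ) ∈ A := by
    constructor
    · exact ⟨le_refl _, tstar_pos.le⟩
    · have : h 0 = 0 := by
        rw [h, Real.zero_rpow (by linarith [hc3] : c - 2 ≠ 0)]
        simp
      rw [this]
      exact h_nonneg (sf_pos 0).le
  have hbdd : BddAbove A := ⟨(c-2)/3, fun a ha => ha.1.2⟩
  set y₀ := sSup A with hy₀
  have hy₀0 : 0 ≤ y₀ := le_csSup hbdd hA0
  have hy₀t : y₀ ≤ (c-2)/3 := csSup_le ⟨0, hA0⟩ (fun a ha => ha.1.2)
  have hy₀half : y₀ ≤ 1/2 := le_trans hy₀t tstar_le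
  -- D ≥ 0 on (0, y₀)
  have Dpos : ∀ z ∈ Ioo 0 y₀, h z ≤ h (sf z) := by
    intro z hz
    obtain ⟨a, haA, hza⟩ := exists_lt_of_lt_csSup ⟨0, hA0⟩ hz.2
    have hat : a ≤ (c-2)/3 := haA.1.2
    have hz1 : h z ≤ h a :=
      h_mono ⟨hz.1.le, by linarith⟩ ⟨haA.1.1, hat⟩ hza.le
    have hz2 : h (sf a) ≤ h (sf z) := by
      apply h_anti
      · exact le_trans tstar_le (sf_half z)
      · exact le_trans tstar_le (sf_half a)
      · exact sf_mono hz.1.le hza.le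
    exact le_trans hz1 (le_trans haA.2 hz2)
  -- D ≤ 0 on (y₀, 1/2)
  have Dneg : ∀ z ∈ Ioo y₀ (1/2), h (sf z) ≤ h z := by
    intro z hz
    have hz0 : 0 < z := lt_of_le_of_lt hy₀0 hz.1
    by_cases hzt : z ≤ (c-2)/3
    · have hzA : z ∉ A := fun hmem => absurd (le_csSup hbdd hmem) (not_le.mpr hz.1)
      have : ¬ (h z ≤ h (sf z)) := fun hc => hzA ⟨⟨hz0.le, hzt⟩, hc⟩
      linarith [not_le.mp this]
    · push_neg at hzt
      apply h_anti (mem_Ici.mpr hzt.le)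
      · exact mem_Ici.mpr (le_trans hzt.le (sf_gt hz0.le).le)
      · exact (sf_gt hz0.le).le
  have Gmono : MonotoneOn G (Icc 0 y₀) := by
    apply monotoneOn_of_deriv_nonneg (convex_Icc _ _)
      (G_contOn.mono (Icc_subset_Icc le_rfl hy₀half))
    · rw [interior_Icc]
      exact fun z hz => (hasDerivAt_G hz.1).differentiableAt.differentiableWithinAt
    · intro z hz
      rw [interior_Icc] at hz
      rw [(hasDerivAt_G hz.1).deriv]
      have := Dpos z hz
      have hc0 : (0:ℝ) ≤ c := by linarith [hc3]
      exact mul_nonneg (mul_nonneg hc0 hz.1.le) (sub_nonneg.mpr this)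
  have Ganti : AntitoneOn G (Icc y₀ (1/2)) := by
    apply antitoneOn_of_deriv_nonpos (convex_Icc _ _)
      (G_contOn.mono (Icc_subset_Icc hy₀0 le_rfl))
    · rw [interior_Icc]
      exact fun z hz => (hasDerivAt_G (lt_of_le_of_lt hy₀0 hz.1)).differentiableAt.differentiableWithinAt
    · intro z hz
      rw [interior_Icc] at hz
      have hz0 : 0 < z := lt_of_le_of_lt hy₀0 hz.1
      rw [(hasDerivAt_G hz0).deriv]
      have := Dneg z hz
      have hc0 : (0:ℝ) ≤ c := by linarith [hc3]
      exact mul_nonpos_of_nonneg_of_nonpos (mul_nonneg hc0 hz0.le) (sub_nonpos.mpr this)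
  rcases le_total y y₀ with hcase | hcase
  · have := Gmono ⟨le_refl 0, hy₀0⟩ ⟨h0, hcase⟩ h0
    rwa [G_zero] at this
  · have := Ganti ⟨hcase, h1⟩ ⟨hy₀half, le_refl _⟩ h1
    rwa [G_half] at this

lemma ratio_mono {x s l : ℝ} (hx : 0 ≤ x) (hxs : x ≤ s) (hs : 0 < s) (hl : 1 ≤ l) :
    (x/(x+1))/(s/(s+1)) ≤ ((l*x)/(l*x+1))/((l*s)/(l*s+1)) := by
  have hx1 : (0:ℝ) < x + 1 := by linarith
  have hs1 : (0:ℝ) < s + 1 := by linarith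
  have hlx1 : (0:ℝ) < l*x + 1 := by nlinarith
  have hls1 : (0:ℝ) < l*s + 1 := by nlinarith
  have hfs : (0:ℝ) < s/(s+1) := by positivity
  have hfls : (0:ℝ) < (l*s)/(l*s+1) := by
    apply div_pos _ hls1; nlinarith
  rw [div_le_div_iff₀ hfs hfls, div_mul_div_comm, div_mul_div_comm,
    div_le_div_iff₀ (by positivity) (by positivity)]
  have hkey : 0 ≤ (x*s*l) * ((l-1)*(s-x)) := by
    apply mul_nonneg
    · positivity
    · exact mul_nonneg (by linarith) (by linarith)
  nlinarith [hkey]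

lemma ratio_le_one {x y : ℝ} (hx0 : 0 ≤ x) (hxy : x ≤ y) (hy0 : 0 < y) (hy1 : y ≤ 1/2) :
    ((x/(x+1))/(Real.sqrt (x^2+y^2)/(Real.sqrt (x^2+y^2)+1)))^c
      + ((y/(y+1))/(Real.sqrt (x^2+y^2)/(Real.sqrt (x^2+y^2)+1)))^c ≤ 1 := by
  set s := Real.sqrt (x^2+y^2) with hs_def
  have hs_sq : s^2 = x^2+y^2 := Real.sq_sqrt (by positivity)
  have hs_nonneg : 0 ≤ s := Real.sqrt_nonneg _
  have hsy : y ≤ s := by nlinarith [sq_nonneg x]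
  have hsx : x ≤ s := by nlinarith [sq_nonneg (s-x), sq_nonneg y]
  have hs0 : 0 < s := lt_of_lt_of_le hy0 hsy
  set l := 1/(2*y) with hl_def
  have hl0 : 0 < l := by positivity
  have hl1 : 1 ≤ l := by
    rw [hl_def, le_div_iff₀ (by linarith)]; linarith
  have hly : l * y = 1/2 := by
    rw [hl_def, div_mul_eq_mul_div, one_mul, div_eq_div_iff (by positivity) (by norm_num)]
    ring
  -- s' = sf (l*x)
  have hsfeq : sf (l*x) = l*s := by
    rw [sf]
    have : (l*x)^2 + 1/4 = (l*s)^2 := by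
      have : (l*s)^2 = l^2 * (x^2+y^2) := by rw [mul_pow, hs_sq]
      rw [this]
      field_simp
      linear_combination (-(4*l*y) - 2) * hly
    rw [this, Real.sqrt_sq (by positivity)]
  have hlx0 : 0 ≤ l*x := by positivity
  have hlxh : l*x ≤ 1/2 := by
    rw [← hly]
    exact mul_le_mul_of_nonneg_left hxy hl0.le
  have hcore := core hlx0 hlxh
  rw [G, hsfeq] at hcore
  -- positivity of F (l*s)
  have hls0 : 0 < l*s := by positivity
  have hfls : 0 < (l*s)/(l*s+1) := by positivity
  have hFls : 0 < F (l*s) := Real.rpow_pos_of_pos hfls _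
  have hc0 : (0:ℝ) ≤ c := by linarith [hc3]
  -- bound each ratio
  have hfs : 0 < s/(s+1) := by positivity
  have hu : ((x/(x+1))/(s/(s+1)))^c ≤ F (l*x) / F (l*s) := by
    have h1 := ratio_mono hx0 hsx hs0 hl1
    have h2 : (0:ℝ) ≤ (x/(x+1))/(s/(s+1)) := by positivity
    calc ((x/(x+1))/(s/(s+1)))^c ≤ (((l*x)/(l*x+1))/((l*s)/(l*s+1)))^c :=
          Real.rpow_le_rpow h2 h1 hc0
      _ = F (l*x) / F (l*s) := by
          rw [F, F, ← Real.div_rpow (by positivity) hfls.le]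
  have hv : ((y/(y+1))/(s/(s+1)))^c ≤ (1/3:ℝ)^c / F (l*s) := by
    have h1 := ratio_mono hy0.le hsy hs0 hl1
    have h2 : (0:ℝ) ≤ (y/(y+1))/(s/(s+1)) := by positivity
    have h3 : (l*y)/(l*y+1) = 1/3 := by rw [hly]; norm_num
    calc ((y/(y+1))/(s/(s+1)))^c ≤ (((l*y)/(l*y+1))/((l*s)/(l*s+1)))^c :=
          Real.rpow_le_rpow h2 h1 hc0
      _ = (1/3:ℝ)^c / F (l*s) := by
          rw [h3, F, ← Real.div_rpow (by norm_num) hfls.le]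
  calc ((x/(x+1))/(s/(s+1)))^c + ((y/(y+1))/(s/(s+1)))^c
      ≤ F (l*x) / F (l*s) + (1/3:ℝ)^c / F (l*s) := add_le_add hu hv
    _ = (F (l*x) + (1/3:ℝ)^c) / F (l*s) := by ring
    _ ≤ 1 := by
        rw [div_le_one hFls]
        linarith [hcore]

lemma main_aux {α : ℝ} (hα : c ≤ α) {x y : ℝ} (hx0 : 0 ≤ x) (hx1 : x ≤ 1/2)
    (hy0 : 0 ≤ y) (hy1 : y ≤ 1/2) (hxy : x ≤ y) :
    (x / (x + 1)) ^ α + (y / (y + 1)) ^ α ≤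
      (Real.sqrt (x ^ 2 + y ^ 2) / (Real.sqrt (x ^ 2 + y ^ 2) + 1)) ^ α := by
  have hα0 : 0 < α := by linarith [hc3]
  rcases eq_or_lt_of_le hy0 with hy | hy
  · -- y = 0, hence x = 0
    have hx : x = 0 := le_antisymm (by linarith) hx0
    rw [hx, ← hy]
    norm_num [Real.zero_rpow (ne_of_gt hα0)]
  · set s := Real.sqrt (x^2+y^2) with hs_def
    have hs_sq : s^2 = x^2+y^2 := Real.sq_sqrt (by positivity)
    have hs_nonneg : 0 ≤ s := Real.sqrt_nonneg _
    have hsy : y ≤ s := by nlinarith [sq_nonneg x]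
    have hsx : x ≤ s := by nlinarith [sq_nonneg (s-x), sq_nonneg y]
    have hs0 : 0 < s := lt_of_lt_of_le hy hsy
    have hs1 : (0:ℝ) < s + 1 := by linarith
    have hfs : 0 < s/(s+1) := by positivity
    set u := (x/(x+1))/(s/(s+1)) with hu_def
    set v := (y/(y+1))/(s/(s+1)) with hv_def
    have hu0 : 0 ≤ u := by positivity
    have hv0 : 0 ≤ v := by positivity
    have hu1 : u ≤ 1 := by
      rw [hu_def, div_le_one hfs, div_le_div_iff₀ (by linarith) hs1]
      nlinarith
    have hv1 : v ≤ 1 := by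
      rw [hv_def, div_le_one hfs, div_le_div_iff₀ (by linarith) hs1]
      nlinarith
    have hxu : x/(x+1) = u * (s/(s+1)) := by
      rw [hu_def, div_mul_cancel₀ _ (ne_of_gt hfs)]
    have hyv : y/(y+1) = v * (s/(s+1)) := by
      rw [hv_def, div_mul_cancel₀ _ (ne_of_gt hfs)]
    have pow_le : ∀ w : ℝ, 0 ≤ w → w ≤ 1 → w^α ≤ w^c := by
      intro w hw0 hw1
      rcases eq_or_lt_of_le hw0 with hw | hw
      · rw [← hw, Real.zero_rpow (ne_of_gt hα0), Real.zero_rpow (by linarith [hc3])]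
      · exact Real.rpow_le_rpow_of_exponent_ge hw hw1 hα
    have hratio := ratio_le_one hx0 hxy hy hy1
    rw [← hu_def, ← hv_def] at hratio
    calc (x/(x+1))^α + (y/(y+1))^α
        = u^α * (s/(s+1))^α + v^α * (s/(s+1))^α := by
          rw [hxu, hyv, Real.mul_rpow hu0 hfs.le, Real.mul_rpow hv0 hfs.le]
      _ ≤ u^c * (s/(s+1))^α + v^c * (s/(s+1))^α := by
          have hfsa := Real.rpow_nonneg hfs.le α
          exact add_le_add (mul_le_mul_of_nonneg_right (pow_le u hu0 hu1) hfsa)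
            (mul_le_mul_of_nonneg_right (pow_le v hv0 hv1) hfsa)
      _ = (u^c + v^c) * (s/(s+1))^α := by ring
      _ ≤ 1 * (s/(s+1))^α :=
          mul_le_mul_of_nonneg_right hratio (Real.rpow_nonneg hfs.le α)
      _ = (s/(s+1))^α := one_mul _
end Mg

theorem stmt_10 (α : ℝ) (hα : α ≥ Real.logb (3 * (Real.sqrt 2 - 1)) 2) :
    ∀ x y : ℝ, 0 ≤ x → x ≤ 1 / 2 → 0 ≤ y → y ≤ 1 / 2 →
      (x / (x + 1)) ^ α + (y / (y + 1)) ^ α ≤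
        (Real.sqrt (x ^ 2 + y ^ 2) / (Real.sqrt (x ^ 2 + y ^ 2) + 1)) ^ α := by
  intro x y hx0 hx1 hy0 hy1
  have hα' : Mg.c ≤ α := hα
  rcases le_total x y with hxy | hxy
  · exact Mg.main_aux hα' hx0 hx1 hy0 hy1 hxy
  · have := Mg.main_aux hα' hy0 hy1 hx0 hx1 hxy
    rw [show y^2 + x^2 = x^2 + y^2 by ring] at this
    linarith [this]
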